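/- Let n, p be positive integers and q : ℕ → ℝⁿ → ℝ^p → ℝⁿ a time-varying discrete-time system map. Call γ : [0,∞) → [0,∞) class-K if it is continuous, strictly increasing, and γ(0) = 0; class-K∞ if in addition γ(r) → ∞ as r → ∞; and call β : [0,∞) × ℕ → [0,∞) class-KL if β(·, t) is class-K for each fixed t and, for each fixed r, t ↦ β(r, t) is nonincreasing with β(r, t) → 0 as t → ∞. Suppose there exist V : ℕ → ℝⁿ → ℝ with V(t, ·) continuous for each t, class-K∞ functions α₁, α₂, α₃, and a class-K function σ such that for all t ∈ ℕ, x ∈ ℝⁿ, v ∈ ℝ^p: α₁(‖x‖) ≤ V(t, x) ≤ α₂(‖x‖) and V(t+1, q(t, x, v)) − V(t, x) ≤ −α₃(‖x‖) + σ(‖v‖). Then the system is globally input-to-state stable: there exist a class-KL function β and a class-K function γ such that for every initial condition x(0) ∈ ℝⁿ and every disturbance sequence v : ℕ → ℝ^p, the trajectory defined by x(t+1) = q(t, x(t), v(t)) satisfies ‖x(t)‖ ≤ β(‖x(0)‖, t) + γ(max_{0 ≤ k ≤ t−1} ‖v(k)‖) for all t ≥ 1. -/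

import Mathlib

open Set Filter

/-- A comparison function `γ : [0,∞) → [0,∞)` of class `K`: continuous, strictly
increasing, and zero at zero (represented as a function on `ℝ`, restricted to
the nonnegative reals, with nonnegative values there). -/
def IsClassK (γ : ℝ → ℝ) : Prop :=
  ContinuousOn γ (Set.Ici 0) ∧ StrictMonoOn γ (Set.Ici 0) ∧ γ 0 = 0 ∧
    ∀ r : ℝ, 0 ≤ r → 0 ≤ γ r

/-- A class `K∞` function: class `K` and unbounded. -/
def IsClassKInf (γ : ℝ → ℝ) : Prop :=
  IsClassK γ ∧ Filter.Tendsto γ Filter.atTop Filter.atTop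

/-- A class `KL` function `β : [0,∞) × ℕ → [0,∞)`: class `K` in its first
argument for each fixed time, and nonincreasing to `0` in time for each fixed
first argument. -/
def IsClassKL (β : ℝ → ℕ → ℝ) : Prop :=
  (∀ t : ℕ, IsClassK (fun r => β r t)) ∧
    ∀ r : ℝ, 0 ≤ r →
      (Antitone fun t => β r t) ∧
        Filter.Tendsto (fun t => β r t) Filter.atTop (nhds 0)

/-! ### Auxiliary lemmas: roots and inverses of class `K∞` functions -/

lemma iss_exists_root {α : ℝ → ℝ} (h : IsClassKInf α) {y : ℝ} (hy : 0 ≤ y) :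
    ∃ r, 0 ≤ r ∧ α r = y := by
  obtain ⟨R, hyR, hR0⟩ :=
    ((h.2.eventually_ge_atTop y).and (eventually_ge_atTop (0 : ℝ))).exists
  have hsub : Icc (0 : ℝ) R ⊆ Ici 0 := fun z hz => hz.1
  have hmem : y ∈ Icc (α 0) (α R) := ⟨by rw [h.1.2.2.1]; exact hy, hyR⟩
  obtain ⟨r, hr, hry⟩ := intermediate_value_Icc hR0 (h.1.1.mono hsub) hmem
  exact ⟨r, hr.1, hry⟩

/-- The (generalized) inverse of a class `K∞` function. -/
noncomputable def kinv (α : ℝ → ℝ) (y : ℝ) : ℝ := sInf {r | 0 ≤ r ∧ y ≤ α r}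

lemma kinv_eq_root {α : ℝ → ℝ} (h : IsClassKInf α) {y r₀ : ℝ} (hr₀ : 0 ≤ r₀)
    (hroot : α r₀ = y) : kinv α y = r₀ := by
  have hleast : IsLeast {r | 0 ≤ r ∧ y ≤ α r} r₀ := by
    constructor
    · exact ⟨hr₀, hroot.ge⟩
    · rintro r ⟨hr, hyr⟩
      by_contra hlt
      push_neg at hlt
      exact absurd hyr (not_le.mpr (hroot ▸ h.1.2.1 hr hr₀ hlt))
  exact hleast.csInf_eq

lemma kinv_spec {α : ℝ → ℝ} (h : IsClassKInf α) {y : ℝ} (hy : 0 ≤ y) :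
    0 ≤ kinv α y ∧ α (kinv α y) = y := by
  obtain ⟨r, hr, hry⟩ := iss_exists_root h hy
  rw [kinv_eq_root h hr hry]
  exact ⟨hr, hry⟩

lemma kinv_cancel {α : ℝ → ℝ} (h : IsClassKInf α) {r : ℝ} (hr : 0 ≤ r) :
    kinv α (α r) = r := kinv_eq_root h hr rfl

lemma kinv_zero {α : ℝ → ℝ} (h : IsClassKInf α) : kinv α 0 = 0 :=
  kinv_eq_root h le_rfl h.1.2.2.1

lemma kinv_strictMonoOn {α : ℝ → ℝ} (h : IsClassKInf α) :
    StrictMonoOn (kinv α) (Ici 0) := by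
  intro y₁ hy₁ y₂ hy₂ hlt
  obtain ⟨h₁0, h₁⟩ := kinv_spec h hy₁
  obtain ⟨h₂0, h₂⟩ := kinv_spec h hy₂
  by_contra hle
  push_neg at hle
  have := h.1.2.1.monotoneOn h₂0 h₁0 hle
  rw [h₁, h₂] at this
  exact absurd hlt (not_lt.mpr this)

lemma kinv_monotoneOn {α : ℝ → ℝ} (h : IsClassKInf α) :
    MonotoneOn (kinv α) (Ici 0) := (kinv_strictMonoOn h).monotoneOn

lemma kinv_nonneg {α : ℝ → ℝ} (h : IsClassKInf α) {y : ℝ} (hy : 0 ≤ y) :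
    0 ≤ kinv α y := (kinv_spec h hy).1

lemma kinv_tendsto {α : ℝ → ℝ} (h : IsClassKInf α) :
    Tendsto (kinv α) atTop atTop := by
  rw [tendsto_atTop]
  intro M
  filter_upwards [eventually_ge_atTop (α (max M 0)), eventually_ge_atTop (0 : ℝ)]
    with y hy hy0
  have hm : (0:ℝ) ≤ max M 0 := le_max_right M 0
  have h1 : kinv α (α (max M 0)) ≤ kinv α y :=
    kinv_monotoneOn h (h.1.2.2.2 _ hm) hy0 hy
  rw [kinv_cancel h hm] at h1
  exact (le_max_left M 0).trans h1

lemma kinv_continuousOn {α : ℝ → ℝ} (h : IsClassKInf α) :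
    ContinuousOn (kinv α) (Ici 0) := by
  intro a ha
  rcases eq_or_lt_of_le (Set.mem_Ici.mp ha : (0:ℝ) ≤ a) with rfl | hpos
  · have hmono := kinv_strictMonoOn h
    have : ContinuousWithinAt (kinv α) (Ici 0) 0 := by
      apply hmono.continuousWithinAt_right_of_surjOn self_mem_nhdsWithin
      intro b hb
      rw [kinv_zero h] at hb
      have hb' : (0:ℝ) < b := hb
      exact ⟨α b, h.1.2.2.2 b hb'.le, kinv_cancel h hb'.le⟩
    exact this
  · apply ContinuousAt.continuousWithinAt
    apply (kinv_strictMonoOn h).continuousAt_of_exists_between (Ici_mem_nhds hpos)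
    · intro b hb
      have hfa : 0 < kinv α a := by
        rw [← kinv_zero h]
        exact kinv_strictMonoOn h self_mem_Ici (le_of_lt hpos) hpos
      refine ⟨α (max b 0), h.1.2.2.2 _ (le_max_right b 0), ?_⟩
      rw [kinv_cancel h (le_max_right b 0)]
      exact ⟨le_max_left b 0, max_lt hb hfa⟩
    · intro b hb
      have hb0 : 0 ≤ b := le_of_lt ((kinv_nonneg h (le_of_lt hpos)).trans_lt hb)
      refine ⟨α b, h.1.2.2.2 b hb0, ?_⟩
      rw [kinv_cancel h hb0]
      exact ⟨hb, le_rfl⟩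

lemma kinv_isClassKInf {α : ℝ → ℝ} (h : IsClassKInf α) : IsClassKInf (kinv α) :=
  ⟨⟨kinv_continuousOn h, kinv_strictMonoOn h, kinv_zero h,
    fun _ hy => kinv_nonneg h hy⟩, kinv_tendsto h⟩

/-- Composition of class `K` functions is class `K`. -/
lemma isClassK_comp {f h : ℝ → ℝ} (hf : IsClassK f) (hh : IsClassK h) :
    IsClassK (fun x => f (h x)) := by
  have hmaps : MapsTo h (Ici 0) (Ici 0) := fun r hr => hh.2.2.2 r hr
  refine ⟨hf.1.comp hh.1 hmaps, hf.2.1.comp hh.2.1 hmaps, ?_, ?_⟩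
  · show f (h 0) = 0
    rw [hh.2.2.1, hf.2.2.1]
  · exact fun r hr => hf.2.2.2 _ (hh.2.2.2 r hr)

/-! ### The rate function `g`: a class `K∞` minorant with `g ∘ α₂ ≤ α₃` and
`id - g` nondecreasing (`g` is `1`-Lipschitz). -/

section Gfun

variable (α₂ α₃ : ℝ → ℝ)

/-- Inf-convolution construction. -/
noncomputable def gfun (u : ℝ) : ℝ :=
  ⨅ r : Ici (0:ℝ), (α₃ r + max (u - α₂ r) 0)

variable {α₂ α₃}
variable (h₂ : IsClassKInf α₂) (h₃ : IsClassKInf α₃)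

include h₂ h₃

set_option linter.unusedSectionVars false

lemma gfun_bdd (u : ℝ) :
    BddBelow (range fun r : Ici (0:ℝ) => (α₃ r + max (u - α₂ r) 0)) := by
  refine ⟨0, ?_⟩
  rintro y ⟨r, rfl⟩
  have := h₃.1.2.2.2 r r.2
  positivity

lemma gfun_nonneg (u : ℝ) : 0 ≤ gfun α₂ α₃ u :=
  le_ciInf fun r => by have := h₃.1.2.2.2 r r.2; positivity

lemma gfun_le {r : ℝ} (hr : 0 ≤ r) : gfun α₂ α₃ (α₂ r) ≤ α₃ r := by
  have := ciInf_le (gfun_bdd h₂ h₃ (α₂ r)) (⟨r, hr⟩ : Ici (0:ℝ))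
  refine this.trans (le_of_eq ?_); simp

lemma gfun_zero : gfun α₂ α₃ 0 = 0 := by
  refine le_antisymm ?_ (gfun_nonneg h₂ h₃ 0)
  have h := ciInf_le (gfun_bdd h₂ h₃ 0) (⟨0, self_mem_Ici⟩ : Ici (0:ℝ))
  calc gfun α₂ α₃ 0 ≤ α₃ 0 + max (0 - α₂ 0) 0 := h
    _ = 0 := by rw [h₂.1.2.2.1, h₃.1.2.2.1]; simp

lemma gfun_lip {u₁ u₂ : ℝ} (hu : u₁ ≤ u₂) :
    gfun α₂ α₃ u₂ ≤ gfun α₂ α₃ u₁ + (u₂ - u₁) := by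
  have : gfun α₂ α₃ u₂ - (u₂ - u₁) ≤ gfun α₂ α₃ u₁ := by
    apply le_ciInf
    intro r
    have h1 : gfun α₂ α₃ u₂ ≤ α₃ r + max (u₂ - α₂ r) 0 :=
      ciInf_le (gfun_bdd h₂ h₃ u₂) r
    have hm : u₁ - α₂ r ≤ max (u₁ - α₂ r) 0 := le_max_left _ _
    have hm0 : (0:ℝ) ≤ max (u₁ - α₂ r) 0 := le_max_right _ _
    have h2 : max (u₂ - α₂ r) 0 ≤ max (u₁ - α₂ r) 0 + (u₂ - u₁) :=
      max_le (by linarith) (by linarith)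
    linarith
  linarith

lemma gfun_mono : Monotone (gfun α₂ α₃) := by
  intro u₁ u₂ hu
  apply le_ciInf
  intro r
  have h1 : gfun α₂ α₃ u₁ ≤ α₃ r + max (u₁ - α₂ r) 0 := ciInf_le (gfun_bdd h₂ h₃ u₁) r
  have h2 : max (u₁ - α₂ r) 0 ≤ max (u₂ - α₂ r) 0 :=
    max_le_max (by linarith) le_rfl
  linarith

lemma gfun_continuous : Continuous (gfun α₂ α₃) := by
  have : LipschitzWith 1 (gfun α₂ α₃) := by
    rw [lipschitzWith_iff_dist_le_mul]
    intro u₁ u₂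
    rw [Real.dist_eq, Real.dist_eq, NNReal.coe_one, one_mul]
    rcases le_total u₁ u₂ with h | h
    · have l := gfun_lip h₂ h₃ h
      have m := gfun_mono h₂ h₃ h
      rw [abs_le, abs_of_nonpos (by linarith)]
      constructor <;> linarith
    · have l := gfun_lip h₂ h₃ h
      have m := gfun_mono h₂ h₃ h
      rw [abs_le, abs_of_nonneg (by linarith)]
      constructor <;> linarith
  exact this.continuous

lemma gfun_strictMonoOn : StrictMonoOn (gfun α₂ α₃) (Ici 0) := by
  intro u₁ hu₁ u₂ _ hlt
  have hu₁' : (0:ℝ) ≤ u₁ := hu₁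
  set m₁ := u₁ + (u₂ - u₁) / 3 with hm₁
  set m₂ := u₁ + 2 * (u₂ - u₁) / 3 with hm₂
  obtain ⟨r₁, hr₁0, hr₁⟩ : ∃ r, 0 ≤ r ∧ α₂ r = m₁ :=
    iss_exists_root h₂ (by simp only [hm₁]; linarith)
  obtain ⟨r₂, hr₂0, hr₂⟩ : ∃ r, 0 ≤ r ∧ α₂ r = m₂ :=
    iss_exists_root h₂ (by simp only [hm₂]; linarith)
  have hr₁₂ : r₁ < r₂ := by
    by_contra hcon
    push_neg at hcon
    have := h₂.1.2.1.monotoneOn hr₂0 hr₁0 hcon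
    rw [hr₁, hr₂] at this
    simp only [hm₁, hm₂] at this
    linarith
  have hg1 : gfun α₂ α₃ u₁ ≤ α₃ r₁ := by
    have h1 : gfun α₂ α₃ u₁ ≤ α₃ r₁ + max (u₁ - α₂ r₁) 0 :=
      ciInf_le (gfun_bdd h₂ h₃ u₁) ⟨r₁, hr₁0⟩
    rw [hr₁, max_eq_right (by simp only [hm₁]; linarith)] at h1
    simpa using h1
  have h33 : α₃ r₁ < α₃ r₂ := h₃.1.2.1 hr₁0 hr₂0 hr₁₂
  have key : min (gfun α₂ α₃ u₁ + (u₂ - u₁) / 3) (α₃ r₂) ≤ gfun α₂ α₃ u₂ := by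
    apply le_ciInf
    rintro ⟨r, hr0⟩
    rcases le_or_gt (α₂ r) m₂ with hc | hc
    · refine (min_le_left _ _).trans ?_
      have h1 : gfun α₂ α₃ u₁ ≤ α₃ r + max (u₁ - α₂ r) 0 :=
        ciInf_le (gfun_bdd h₂ h₃ u₁) ⟨r, hr0⟩
      have h2 : max (u₂ - α₂ r) 0 = u₂ - α₂ r := by
        rw [max_eq_left]; simp only [hm₂] at hc; linarith
      have h3 : max (u₁ - α₂ r) 0 + (u₂ - u₁) / 3 ≤ u₂ - α₂ r := by
        rcases le_or_gt (α₂ r) u₁ with h | h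
        · rw [max_eq_left (by linarith)]; linarith
        · rw [max_eq_right (by linarith)]; simp only [hm₂] at hc; linarith
      simp only []
      linarith
    · refine (min_le_right _ _).trans ?_
      have hrr : r₂ ≤ r := by
        by_contra hcon
        push_neg at hcon
        have := h₂.1.2.1.monotoneOn hr0 hr₂0 hcon.le
        rw [hr₂] at this
        linarith
      have := h₃.1.2.1.monotoneOn hr₂0 hr0 hrr
      have hmax : (0:ℝ) ≤ max (u₂ - α₂ r) 0 := le_max_right _ _
      simp only []
      linarith
  rcases le_total (gfun α₂ α₃ u₁ + (u₂ - u₁) / 3) (α₃ r₂) with h | h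
  · rw [min_eq_left h] at key; linarith
  · rw [min_eq_right h] at key; linarith

lemma gfun_lower (R u : ℝ) (hR : 0 ≤ R) :
    min (α₃ R) (u - α₂ R) ≤ gfun α₂ α₃ u := by
  apply le_ciInf
  rintro ⟨r, hr0⟩
  rcases le_total R r with h | h
  · have := h₃.1.2.1.monotoneOn hR hr0 h
    have hmax : (0:ℝ) ≤ max (u - α₂ r) 0 := le_max_right _ _
    refine (min_le_left _ _).trans ?_
    simp only []
    linarith
  · have := h₂.1.2.1.monotoneOn hr0 hR h
    have h3 := h₃.1.2.2.2 r hr0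
    refine (min_le_right _ _).trans ?_
    have : u - α₂ R ≤ max (u - α₂ r) 0 :=
      (by linarith : u - α₂ R ≤ u - α₂ r).trans (le_max_left _ _)
    simp only []
    linarith

lemma gfun_tendsto : Tendsto (gfun α₂ α₃) atTop atTop := by
  rw [tendsto_atTop]
  intro M
  obtain ⟨R, hMR, hR0⟩ :=
    ((h₃.2.eventually_ge_atTop M).and (eventually_ge_atTop (0:ℝ))).exists
  filter_upwards [eventually_ge_atTop (M + α₂ R)] with u hu
  refine le_trans ?_ (gfun_lower h₂ h₃ R u hR0)
  exact le_min hMR (by linarith)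

lemma gfun_isClassKInf : IsClassKInf (gfun α₂ α₃) :=
  ⟨⟨(gfun_continuous h₂ h₃).continuousOn, gfun_strictMonoOn h₂ h₃,
    gfun_zero h₂ h₃, fun u _ => gfun_nonneg h₂ h₃ u⟩, gfun_tendsto h₂ h₃⟩

end Gfun

/-! ### The one-step contraction `φ(r) = r - g(r)/2` and its iterates -/

section Phi

variable {g : ℝ → ℝ}
variable (hgc : Continuous g) (hg0 : g 0 = 0) (hgnn : ∀ u, 0 ≤ g u)
variable (hglip : ∀ u₁ u₂ : ℝ, u₁ ≤ u₂ → g u₂ ≤ g u₁ + (u₂ - u₁))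
variable (hgsm : StrictMonoOn g (Ici 0))

noncomputable def phi (g : ℝ → ℝ) (r : ℝ) : ℝ := r - g r / 2

set_option linter.unusedSectionVars false

include hglip in
lemma phi_strictMono : StrictMono (phi g) := by
  intro r₁ r₂ h
  have := hglip r₁ r₂ h.le
  simp only [phi]
  linarith

include hgc in
lemma phi_continuous : Continuous (phi g) := by
  unfold phi; fun_prop

include hg0 in
lemma phi_zero : phi g 0 = 0 := by simp [phi, hg0]

include hgnn in
lemma phi_le_self (r : ℝ) : phi g r ≤ r := by
  have := hgnn r; simp only [phi]; linarith

include hg0 hglip in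
lemma phi_nonneg {r : ℝ} (hr : 0 ≤ r) : 0 ≤ phi g r := by
  have := hglip 0 r hr
  simp only [phi]
  linarith [hg0]

include hg0 hglip in
lemma phi_iter_nonneg (t : ℕ) {r : ℝ} (hr : 0 ≤ r) : 0 ≤ (phi g)^[t] r := by
  induction t with
  | zero => simpa
  | succ t ih =>
    rw [Function.iterate_succ_apply']
    exact phi_nonneg hg0 hglip ih

include hg0 hgnn hglip in
lemma phi_iter_antitone {r : ℝ} (hr : 0 ≤ r) :
    Antitone fun t => (phi g)^[t] r := by
  apply antitone_nat_of_succ_le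
  intro t
  rw [Function.iterate_succ_apply']
  exact phi_le_self hgnn _

include hglip in
lemma phi_iter_mono (t : ℕ) : Monotone ((phi g)^[t]) :=
  ((phi_strictMono hglip).iterate t).monotone

include hgc hg0 hgnn hglip hgsm in
lemma phi_iter_tendsto {r : ℝ} (hr : 0 ≤ r) :
    Tendsto (fun t => (phi g)^[t] r) atTop (nhds 0) := by
  set a : ℕ → ℝ := fun t => (phi g)^[t] r with ha
  have hanti : Antitone a := phi_iter_antitone hg0 hgnn hglip hr
  have hbdd : BddBelow (range a) :=
    ⟨0, by rintro y ⟨t, rfl⟩; exact phi_iter_nonneg hg0 hglip t hr⟩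
  have hL : Tendsto a atTop (nhds (⨅ t, a t)) := tendsto_atTop_ciInf hanti hbdd
  set L := ⨅ t, a t with hLdef
  have hL0 : 0 ≤ L := le_ciInf fun t => phi_iter_nonneg hg0 hglip t hr
  have hfix : phi g L = L := by
    have h1 : Tendsto (fun t => a (t + 1)) atTop (nhds L) :=
      hL.comp (tendsto_add_atTop_nat 1)
    have h2 : Tendsto (fun t => phi g (a t)) atTop (nhds (phi g L)) :=
      ((phi_continuous hgc).tendsto L).comp hL
    have heq : (fun t => a (t + 1)) = fun t => phi g (a t) := by
      funext t; simp [ha, Function.iterate_succ_apply']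
    rw [heq] at h1
    exact tendsto_nhds_unique h2 h1
  have hgL : g L = 0 := by simp only [phi] at hfix; linarith
  rcases eq_or_lt_of_le hL0 with h | h
  · rwa [← h] at hL
  · exfalso
    have := hgsm self_mem_Ici (le_of_lt h) h
    rw [hg0, hgL] at this
    exact lt_irrefl 0 this

end Phi

/-- Theorem 1 (ISS via an ISS-Lyapunov function, discrete-time, time-varying):
if the system `x(t+1) = q(t, x(t), v(t))` admits an ISS-Lyapunov function `V`,
then it is globally input-to-state stable. -/
theorem stmt_12 (n p : ℕ) (hn : 0 < n) (hp : 0 < p)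
    (q : ℕ → EuclideanSpace ℝ (Fin n) → EuclideanSpace ℝ (Fin p) →
      EuclideanSpace ℝ (Fin n))
    (V : ℕ → EuclideanSpace ℝ (Fin n) → ℝ)
    (hVcont : ∀ t, Continuous (V t))
    (α₁ α₂ α₃ σ : ℝ → ℝ)
    (hα₁ : IsClassKInf α₁) (hα₂ : IsClassKInf α₂) (hα₃ : IsClassKInf α₃)
    (hσ : IsClassK σ)
    (hlow : ∀ (t : ℕ) (x : EuclideanSpace ℝ (Fin n)), α₁ ‖x‖ ≤ V t x)
    (hup : ∀ (t : ℕ) (x : EuclideanSpace ℝ (Fin n)), V t x ≤ α₂ ‖x‖)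
    (hdec : ∀ (t : ℕ) (x : EuclideanSpace ℝ (Fin n))
        (v : EuclideanSpace ℝ (Fin p)),
        V (t + 1) (q t x v) - V t x ≤ -α₃ ‖x‖ + σ ‖v‖) :
    ∃ (β : ℝ → ℕ → ℝ) (γ : ℝ → ℝ), IsClassKL β ∧ IsClassK γ ∧
      ∀ (x : ℕ → EuclideanSpace ℝ (Fin n)) (v : ℕ → EuclideanSpace ℝ (Fin p)),
        (∀ t : ℕ, x (t + 1) = q t (x t) (v t)) →
        ∀ t : ℕ, ∀ ht : 1 ≤ t,
          ‖x t‖ ≤ β ‖x 0‖ t +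
            γ ((Finset.range t).sup'
                (Finset.nonempty_range_iff.mpr (Nat.one_le_iff_ne_zero.mp ht))
                fun k => ‖v k‖) := by
  classical
  set g : ℝ → ℝ := gfun α₂ α₃ with hgdef
  have hgK : IsClassKInf g := gfun_isClassKInf hα₂ hα₃
  have hgc : Continuous g := gfun_continuous hα₂ hα₃
  have hg0 : g 0 = 0 := gfun_zero hα₂ hα₃
  have hgnn : ∀ u, 0 ≤ g u := gfun_nonneg hα₂ hα₃
  have hglip : ∀ u₁ u₂ : ℝ, u₁ ≤ u₂ → g u₂ ≤ g u₁ + (u₂ - u₁) :=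
    fun u₁ u₂ h => gfun_lip hα₂ hα₃ h
  have hgsm : StrictMonoOn g (Ici 0) := gfun_strictMonoOn hα₂ hα₃
  have hgmono : Monotone g := gfun_mono hα₂ hα₃
  have hkinv₁ : IsClassKInf (kinv α₁) := kinv_isClassKInf hα₁
  have hkinvg : IsClassKInf (kinv g) := kinv_isClassKInf hgK
  -- class K of iterates of φ
  have hphiK : ∀ t : ℕ, IsClassK ((phi g)^[t]) := by
    intro t
    refine ⟨((phi_continuous hgc).iterate t).continuousOn,
      ((phi_strictMono hglip).iterate t).strictMonoOn _, ?_, ?_⟩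
    · exact Function.iterate_fixed (phi_zero hg0) t
    · exact fun r hr => phi_iter_nonneg hg0 hglip t hr
  refine ⟨fun r t => kinv α₁ ((phi g)^[t] (α₂ r)),
    fun s => kinv α₁ (kinv g (2 * σ s)), ?_, ?_, ?_⟩
  · -- β is class KL
    constructor
    · intro t
      have h1 := isClassK_comp hkinv₁.1 (hphiK t)
      have h2 := isClassK_comp (f := fun u => kinv α₁ ((phi g)^[t] u))
        (h := α₂) h1 hα₂.1
      exact h2
    · intro r hr
      have hα₂r : (0:ℝ) ≤ α₂ r := hα₂.1.2.2.2 r hr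
      constructor
      · intro t₁ t₂ hts
        exact kinv_monotoneOn hα₁
          (phi_iter_nonneg hg0 hglip t₂ hα₂r)
          (phi_iter_nonneg hg0 hglip t₁ hα₂r)
          (phi_iter_antitone hg0 hgnn hglip hα₂r hts)
      · have h0 : Tendsto (fun t => (phi g)^[t] (α₂ r)) atTop (nhds 0) :=
          phi_iter_tendsto hgc hg0 hgnn hglip hgsm hα₂r
        have h1 : Tendsto (fun t => (phi g)^[t] (α₂ r)) atTop (nhdsWithin 0 (Ici 0)) := by
          rw [tendsto_nhdsWithin_iff]
          exact ⟨h0, Filter.Eventually.of_forall fun t =>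
            phi_iter_nonneg hg0 hglip t hα₂r⟩
        have h2 : ContinuousWithinAt (kinv α₁) (Ici 0) 0 :=
          kinv_continuousOn hα₁ 0 self_mem_Ici
        have := h2.tendsto.comp h1
        rwa [kinv_zero hα₁] at this
  · -- γ is class K
    have h2σ : IsClassK (fun s => 2 * σ s) := by
      refine ⟨continuousOn_const.mul hσ.1, ?_,
        by show 2 * σ 0 = 0; rw [hσ.2.2.1]; ring, ?_⟩
      · intro a ha b hb hab
        have := hσ.2.1 ha hb hab
        show 2 * σ a < 2 * σ b
        linarith
      · intro r hr
        have := hσ.2.2.2 r hr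
        show (0:ℝ) ≤ 2 * σ r
        linarith
    have h1 := isClassK_comp hkinvg.1 h2σ
    exact isClassK_comp hkinv₁.1 h1
  · -- the trajectory estimate
    intro x v hx t ht
    set ne := Finset.nonempty_range_iff.mpr (Nat.one_le_iff_ne_zero.mp ht)
    set s : ℝ := (Finset.range t).sup' ne (fun k => ‖v k‖) with hsdef
    have hs0 : 0 ≤ s := by
      have h0mem : 0 ∈ Finset.range t := Finset.mem_range.mpr ht
      exact (norm_nonneg (v 0)).trans (Finset.le_sup' (fun k => ‖v k‖) h0mem)
    set c : ℝ := σ s with hcdef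
    have hc0 : 0 ≤ c := hσ.2.2.2 s hs0
    set D : ℝ := kinv g (2 * c) with hDdef
    obtain ⟨hD0, hgD⟩ := kinv_spec hgK (by linarith : (0:ℝ) ≤ 2 * c)
    set W : ℕ → ℝ := fun k => V k (x k) with hWdef
    have hW1 : ∀ k, α₁ ‖x k‖ ≤ W k := fun k => hlow k (x k)
    have hW2 : ∀ k, W k ≤ α₂ ‖x k‖ := fun k => hup k (x k)
    have hWnn : ∀ k, 0 ≤ W k := fun k =>
      (hα₁.1.2.2.2 _ (norm_nonneg _)).trans (hW1 k)
    have hstep : ∀ k, k < t → W (k + 1) ≤ W k - g (W k) + c := by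
      intro k hk
      have hd := hdec k (x k) (v k)
      rw [← hx k] at hd
      have hg1 : g (W k) ≤ g (α₂ ‖x k‖) := hgmono (hW2 k)
      have hg2 : g (α₂ ‖x k‖) ≤ α₃ ‖x k‖ := gfun_le hα₂ hα₃ (norm_nonneg _)
      have hσ1 : σ ‖v k‖ ≤ c :=
        hσ.2.1.monotoneOn (norm_nonneg _) hs0
          (Finset.le_sup' (fun k => ‖v k‖) (Finset.mem_range.mpr hk))
      simp only [hWdef]
      linarith
    have hkey : ∀ k, k ≤ t → W k ≤ max ((phi g)^[k] (W 0)) D := by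
      intro k
      induction k with
      | zero => intro _; simp only [Function.iterate_zero, id_eq]; exact le_max_left _ _
      | succ k ih =>
        intro hk1
        have hkt : k < t := hk1
        have ihk := ih (Nat.le_of_lt hkt)
        rcases le_or_gt (W k) D with hle | hgt
        · -- invariance of the sublevel set
          have h1 := hstep k hkt
          have h2 := hglip (W k) D hle
          refine le_trans ?_ (le_max_right _ _)
          linarith
        · -- contraction outside the sublevel set
          have h1 := hstep k hkt
          have h2 : g D ≤ g (W k) := hgmono hgt.le
          have h3 : W (k + 1) ≤ phi g (W k) := by
            simp only [phi]
            linarith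
          have h4 : W k ≤ (phi g)^[k] (W 0) := by
            rcases max_cases ((phi g)^[k] (W 0)) D with ⟨heq, _⟩ | ⟨heq, hge⟩
            · rwa [heq] at ihk
            · rw [heq] at ihk; linarith
          have h5 : phi g (W k) ≤ (phi g)^[k + 1] (W 0) := by
            rw [Function.iterate_succ_apply']
            exact ((phi_strictMono hglip).monotone h4)
          exact h3.trans (h5.trans (le_max_left _ _))
    -- conclude
    have hWt := hkey t le_rfl
    have hA : (phi g)^[t] (W 0) ≤ (phi g)^[t] (α₂ ‖x 0‖) :=
      phi_iter_mono hglip t (hW2 0)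
    set A : ℝ := (phi g)^[t] (α₂ ‖x 0‖) with hAdef
    have hA0 : 0 ≤ A :=
      phi_iter_nonneg hg0 hglip t (hα₂.1.2.2.2 _ (norm_nonneg _))
    have hM : α₁ ‖x t‖ ≤ max A D := by
      refine (hW1 t).trans (hWt.trans ?_)
      exact max_le_max hA le_rfl
    have hM0 : (0:ℝ) ≤ max A D := le_max_of_le_left hA0
    have hxt : ‖x t‖ ≤ kinv α₁ (max A D) := by
      have := kinv_monotoneOn hα₁
        (hα₁.1.2.2.2 _ (norm_nonneg (x t))) hM0 hM
      rwa [kinv_cancel hα₁ (norm_nonneg (x t))] at this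
    have hsplit : kinv α₁ (max A D) ≤ kinv α₁ A + kinv α₁ D := by
      have hkA := kinv_nonneg hα₁ hA0
      have hkD := kinv_nonneg hα₁ hD0
      rcases max_cases A D with ⟨heq, _⟩ | ⟨heq, _⟩ <;> rw [heq] <;> linarith
    exact hxt.trans hsplit
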